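/- Let d ≥ 1, t₀ ∈ ℝ, and let A : ℝ → ℂ^{d×d} be twice continuously differentiable on a neighborhood of t₀. Define E(τ) = exp(τ·A(t₀ + τ/2)) and Γ(τ) = E'(τ)·E(τ)⁻¹ (the logarithmic derivative of the exponential midpoint propagator; note E(τ) is invertible since it is a matrix exponential). Then Γ(0) = A(t₀) and Γ'(0) = A'(t₀). -/

import Mathlib

open Filter Topology NormedSpace

section GeneralAlgebra

variable {𝔸 : Type*} [NormedRing 𝔸] [NormedAlgebra ℝ 𝔸] [CompleteSpace 𝔸]

/-- General Banach algebra version of the key derivative computation for the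
exponential midpoint propagator. -/
theorem exp_midpoint_master (t₀ : ℝ) (A A' : ℝ → 𝔸) (U : Set ℝ)
    (hU : IsOpen U) (ht₀ : t₀ ∈ U)
    (hAd : ∀ t ∈ U, HasDerivAt A (A' t) t)
    (hA'c : ContinuousOn A' U) (hAc : ContinuousOn A U) :
    ∃ (g : ℝ → 𝔸) (ε : ℝ), 0 < ε ∧
      (∀ τ : ℝ, |τ| < ε → HasDerivAt (fun σ : ℝ => exp (σ • A (t₀ + σ / 2)))
        (A (t₀ + τ / 2) * exp (τ • A (t₀ + τ / 2)) + τ • g τ) τ) ∧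
      ContinuousAt g 0 ∧ g 0 = (2⁻¹ : ℝ) • A' t₀ ∧
      Continuous (exp : 𝔸 → 𝔸) := by
  classical
  letI : NormedAlgebra ℚ 𝔸 := .restrictScalars ℚ ℝ 𝔸
  set C : ℝ → 𝔸 := fun τ => A (t₀ + τ / 2) with hCdef
  set C' : ℝ → 𝔸 := fun τ => (2⁻¹ : ℝ) • A' (t₀ + τ / 2) with hC'def
  set B : ℝ → 𝔸 := fun τ => τ • C τ with hBdef
  set D : 𝔸 → (𝔸 →L[ℝ] 𝔸) := fun x => fderiv ℝ (exp) x with hDdef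
  obtain ⟨ε, hε, hball⟩ := Metric.isOpen_iff.1 hU t₀ ht₀
  have hmem : ∀ τ : ℝ, |τ| < ε → t₀ + τ / 2 ∈ U := by
    intro τ hτ
    apply hball
    rw [Metric.mem_ball, Real.dist_eq]
    have : |t₀ + τ / 2 - t₀| = |τ| / 2 := by
      rw [show t₀ + τ / 2 - t₀ = τ / 2 by ring, abs_div]
      norm_num
    rw [this]
    have := abs_nonneg τ
    linarith
  have hexpd : ∀ x : 𝔸, HasFDerivAt (exp) (D x) x := fun x =>
    (exp_analytic x).differentiableAt.hasFDerivAt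
  have hDcont : Continuous D := by
    have h1 : ContDiff ℝ 1 (exp : 𝔸 → 𝔸) :=
      contDiff_iff_contDiffAt.mpr fun x => (exp_analytic x).contDiffAt
    exact h1.continuous_fderiv one_ne_zero
  -- derivative of C
  have hCd : ∀ τ : ℝ, |τ| < ε → HasDerivAt C (C' τ) τ := by
    intro τ hτ
    have hin : HasDerivAt (fun σ : ℝ => t₀ + σ / 2) (2⁻¹ : ℝ) τ := by
      simpa using ((hasDerivAt_id τ).div_const 2).const_add t₀
    have := (hAd _ (hmem τ hτ)).scomp τ hin
    exact this
  -- derivative of B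
  have hBd : ∀ τ : ℝ, |τ| < ε → HasDerivAt B (τ • C' τ + C τ) τ := by
    intro τ hτ
    have := (hasDerivAt_id τ).smul (hCd τ hτ)
    rw [one_smul] at this
    exact this
  -- key commutation identity
  have hkey : ∀ τ : ℝ, D (B τ) (C τ) = C τ * exp (B τ) := by
    intro τ
    have comm : ∀ s : ℝ, Commute (s • C τ) (B τ) :=
      fun s => ((Commute.refl (C τ)).smul_right τ).smul_left s
    have h2 : ∀ s : ℝ, exp (B τ + s • C τ) = exp (s • C τ) * exp (B τ) := by
      intro s
      rw [add_comm, exp_add_of_commute (comm s)]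
    have h1 : HasDerivAt (fun s : ℝ => exp (B τ + s • C τ)) (C τ * exp (B τ)) 0 := by
      have h0 : HasDerivAt (fun s : ℝ => exp (s • C τ) * exp (B τ))
          (C τ * exp (B τ)) 0 := by
        have := (hasDerivAt_exp_smul_const (𝕂 := ℝ) (C τ) (0 : ℝ)).mul_const (exp (B τ))
        simpa [exp_zero] using this
      exact h0.congr_of_eventuallyEq (Eventually.of_forall fun s => h2 s)
    have h3 : HasDerivAt (fun s : ℝ => exp (B τ + s • C τ)) (D (B τ) (C τ)) 0 := by
      have hin : HasDerivAt (fun s : ℝ => B τ + s • C τ) (C τ) 0 := by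
        simpa using ((hasDerivAt_id (0 : ℝ)).smul_const (C τ)).const_add (B τ)
      have := (hexpd (B τ)).comp_hasDerivAt_of_eq 0 hin (by simp)
      exact this
    exact h3.unique h1
  refine ⟨fun τ => D (B τ) (C' τ), ε, hε, ?_, ?_, ?_, exp_continuous⟩
  · intro τ hτ
    have hE : HasDerivAt (fun σ : ℝ => exp (B σ)) (D (B τ) (τ • C' τ + C τ)) τ :=
      (hexpd (B τ)).comp_hasDerivAt τ (hBd τ hτ)
    have : D (B τ) (τ • C' τ + C τ) = C τ * exp (B τ) + τ • D (B τ) (C' τ) := by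
      rw [map_add, map_smul, hkey τ, add_comm]
    rw [this] at hE
    exact hE
  · -- continuity of g at 0
    have haff : ContinuousAt (fun τ : ℝ => t₀ + τ / 2) 0 := by fun_prop
    have hC0 : ContinuousAt C 0 := by
      have hat : ContinuousAt A (t₀ + 0 / 2) := by
        simpa using hAc.continuousAt (hU.mem_nhds ht₀)
      exact hat.comp (f := fun τ : ℝ => t₀ + τ / 2) haff
    have hC'0 : ContinuousAt C' 0 := by
      have hat : ContinuousAt A' (t₀ + 0 / 2) := by
        simpa using hA'c.continuousAt (hU.mem_nhds ht₀)
      exact (((hat.comp (f := fun τ : ℝ => t₀ + τ / 2) haff)).const_smul (2⁻¹ : ℝ))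
    have hB0 : ContinuousAt B 0 := (continuousAt_id).smul hC0
    have hDB : ContinuousAt (fun τ : ℝ => D (B τ)) 0 := (hDcont.continuousAt).comp hB0
    exact (isBoundedBilinearMap_apply.continuous.continuousAt).comp (hDB.prodMk hC'0)
  · -- value of g at 0
    have hB00 : B 0 = 0 := by simp [hBdef]
    have hD0 : D 0 = ContinuousLinearMap.id ℝ 𝔸 := hasFDerivAt_exp_zero.fderiv
    show D (B 0) (C' 0) = (2⁻¹ : ℝ) • A' t₀
    rw [hB00, hD0]
    show C' 0 = (2⁻¹ : ℝ) • A' t₀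
    norm_num [hC'def]

end GeneralAlgebra

section MatrixBridge

/-- Matrix version, stated purely topologically (instance independent). -/
theorem matrix_exp_midpoint_master (d : ℕ) (t₀ : ℝ)
    (A A' : ℝ → Matrix (Fin d) (Fin d) ℂ) (U : Set ℝ)
    (hU : IsOpen U) (ht₀ : t₀ ∈ U)
    (hAd : ∀ t ∈ U, Tendsto (slope A t) (𝓝[≠] t) (𝓝 (A' t)))
    (hA'c : ContinuousOn A' U) (hAc : ContinuousOn A U) :
    ∃ (g : ℝ → Matrix (Fin d) (Fin d) ℂ) (ε : ℝ), 0 < ε ∧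
      (∀ τ : ℝ, |τ| < ε →
        Tendsto (slope (fun σ : ℝ => exp (σ • A (t₀ + σ / 2))) τ) (𝓝[≠] τ)
          (𝓝 (A (t₀ + τ / 2) * exp (τ • A (t₀ + τ / 2)) + τ • g τ))) ∧
      ContinuousAt g 0 ∧ g 0 = (2⁻¹ : ℝ) • A' t₀ ∧
      ContinuousAt (fun τ : ℝ => (exp (τ • A (t₀ + τ / 2)))⁻¹) 0 := by
  letI : SeminormedRing (Matrix (Fin d) (Fin d) ℂ) := Matrix.linftyOpSemiNormedRing
  letI : NormedRing (Matrix (Fin d) (Fin d) ℂ) := Matrix.linftyOpNormedRing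
  letI : NormedAlgebra ℝ (Matrix (Fin d) (Fin d) ℂ) := Matrix.linftyOpNormedAlgebra
  have hexpeq : (exp : Matrix (Fin d) (Fin d) ℂ → Matrix (Fin d) (Fin d) ℂ) = exp := by
    letI : NormedAlgebra ℂ (Matrix (Fin d) (Fin d) ℂ) := Matrix.linftyOpNormedAlgebra
    rfl
  have hAd' : ∀ t ∈ U, HasDerivAt A (A' t) t := fun t ht =>
    hasDerivAt_iff_tendsto_slope.2 (hAd t ht)
  obtain ⟨g, ε, hε, h1, h2, h3, h4⟩ :=
    exp_midpoint_master t₀ A A' U hU ht₀ hAd' hA'c hAc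
  refine ⟨g, ε, hε, ?_, h2, h3, ?_⟩
  · intro τ hτ
    rw [hexpeq]
    exact hasDerivAt_iff_tendsto_slope.1 (h1 τ hτ)
  · have : ∀ τ : ℝ, (exp (τ • A (t₀ + τ / 2)))⁻¹ = exp (-(τ • A (t₀ + τ / 2))) := by
      intro τ
      rw [← Matrix.exp_neg, hexpeq]
    simp only [this]
    have hAc0 : ContinuousAt (fun τ : ℝ => -(τ • A (t₀ + τ / 2))) 0 := by
      have hcont : ContinuousAt (fun τ : ℝ => t₀ + τ / 2) 0 := by fun_prop
      have hat : ContinuousAt A (t₀ + 0 / 2) := by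
        simpa using hAc.continuousAt (hU.mem_nhds ht₀)
      exact ((continuousAt_id.smul (hat.comp (f := fun τ : ℝ => t₀ + τ / 2) hcont))).neg
    letI : NormedAlgebra ℚ (Matrix (Fin d) (Fin d) ℂ) := .restrictScalars ℚ ℝ _
    exact (exp_continuous.continuousAt).comp hAc0

end MatrixBridge

attribute [local instance] Matrix.normedAddCommGroup Matrix.normedSpace

section SupWorld

variable {d : ℕ}

/-- If `h` is continuous at `0` then `τ ↦ τ • h τ` has derivative `h 0` at `0`. -/
theorem hasDerivAt_smul_self {h : ℝ → Matrix (Fin d) (Fin d) ℂ}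
    (hc : ContinuousAt h 0) :
    HasDerivAt (fun τ : ℝ => τ • h τ) (h 0) 0 := by
  apply hasDerivAt_iff_tendsto_slope.2
  have heq : h =ᶠ[𝓝[≠] (0:ℝ)] slope (fun τ : ℝ => τ • h τ) 0 := by
    filter_upwards [self_mem_nhdsWithin] with τ hτ
    have hτ' : τ ≠ 0 := hτ
    rw [slope_def_module]
    simp [smul_smul, inv_mul_cancel₀ hτ']
  exact Tendsto.congr' heq (hc.tendsto.mono_left nhdsWithin_le_nhds)

end SupWorld

/-- The logarithmic derivative Γ of the exponential midpoint propagator satisfies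
Γ(0) = A(t₀) and Γ'(0) = A'(t₀). -/
theorem midpoint_Gamma_zero_and_first_derivative
    (d : ℕ) (hd : 1 ≤ d) (t₀ : ℝ)
    (A : ℝ → Matrix (Fin d) (Fin d) ℂ)
    (hA : ContDiffAt ℝ 2 A t₀)
    (E Γ : ℝ → Matrix (Fin d) (Fin d) ℂ)
    (hE : ∀ τ, E τ = NormedSpace.exp (τ • A (t₀ + τ/2)))
    (hΓ : ∀ τ, Γ τ = deriv E τ * (E τ)⁻¹) :
    Γ 0 = A t₀ ∧ deriv Γ 0 = deriv A t₀ := by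
  classical
  obtain ⟨u, hu_nhds, hAu⟩ := hA.contDiffOn le_rfl (by simp)
  set U : Set ℝ := interior u with hUdef
  have hUopen : IsOpen U := isOpen_interior
  have ht₀U : t₀ ∈ U := mem_interior_iff_mem_nhds.2 hu_nhds
  have hAU : ContDiffOn ℝ 2 A U := hAu.mono interior_subset
  have hdiff : ∀ t ∈ U, HasDerivAt A (deriv A t) t := fun t ht =>
    ((hAU.differentiableOn (by norm_num)).differentiableAt
      (hUopen.mem_nhds ht)).hasDerivAt
  have hslope : ∀ t ∈ U, Tendsto (slope A t) (𝓝[≠] t) (𝓝 (deriv A t)) := fun t ht =>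
    hasDerivAt_iff_tendsto_slope.1 (hdiff t ht)
  have hA'c : ContinuousOn (deriv A) U :=
    hAU.continuousOn_deriv_of_isOpen hUopen (by norm_num)
  have hAc : ContinuousOn A U := hAU.continuousOn
  obtain ⟨g, ε, hε, h1, h2, h3, h4⟩ :=
    matrix_exp_midpoint_master d t₀ A (deriv A) U hUopen ht₀U hslope hA'c hAc
  have hEfun : E = fun σ : ℝ => NormedSpace.exp (σ • A (t₀ + σ/2)) := funext hE
  have hEd : ∀ τ : ℝ, |τ| < ε →
      HasDerivAt E (A (t₀ + τ/2) * E τ + τ • g τ) τ := by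
    intro τ hτ
    have hh := hasDerivAt_iff_tendsto_slope.2 (h1 τ hτ)
    simp only [hEfun]
    exact hh
  have hEinv : ∀ τ : ℝ, E τ * (E τ)⁻¹ = 1 := by
    intro τ
    rw [hE]
    exact Matrix.mul_nonsing_inv _
      ((Matrix.isUnit_iff_isUnit_det _).1 (Matrix.isUnit_exp _))
  have hΓeq : ∀ τ : ℝ, |τ| < ε → Γ τ = A (t₀ + τ/2) + τ • (g τ * (E τ)⁻¹) := by
    intro τ hτ
    rw [hΓ, show deriv E τ = _ from (hEd τ hτ).deriv, add_mul, Matrix.smul_mul, mul_assoc, hEinv, mul_one]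
  have hΓ0 : Γ 0 = A t₀ := by
    have := hΓeq 0 (by simpa using hε)
    simpa using this
  refine ⟨hΓ0, ?_⟩
  -- derivative of Γ at 0
  have hC0 : HasDerivAt (fun τ : ℝ => A (t₀ + τ/2)) ((2⁻¹ : ℝ) • deriv A t₀) 0 := by
    have hin : HasDerivAt (fun σ : ℝ => t₀ + σ/2) (2⁻¹ : ℝ) 0 := by
      simpa using ((hasDerivAt_id (0:ℝ)).div_const 2).const_add t₀
    have := (hdiff t₀ ht₀U).scomp_of_eq 0 hin (by norm_num)
    exact this
  have hE0 : E 0 = 1 := by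
    rw [hE]
    simp [NormedSpace.exp_zero]
  have hcont : ContinuousAt (fun τ : ℝ => g τ * (E τ)⁻¹) 0 := by
    have h4' : ContinuousAt (fun τ : ℝ => (E τ)⁻¹) 0 := by
      rw [hEfun]; exact h4
    exact h2.mul h4'
  have hsmul : HasDerivAt (fun τ : ℝ => τ • (g τ * (E τ)⁻¹)) ((2⁻¹ : ℝ) • deriv A t₀) 0 := by
    have := hasDerivAt_smul_self hcont
    rwa [h3, hE0, inv_one, mul_one] at this
  have hΓd : HasDerivAt Γ (deriv A t₀) 0 := by
    have hsum := hC0.add hsmul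
    have hval : (2⁻¹ : ℝ) • deriv A t₀ + (2⁻¹ : ℝ) • deriv A t₀ = deriv A t₀ := by
      rw [← add_smul]; norm_num
    rw [hval] at hsum
    apply hsum.congr_of_eventuallyEq
    filter_upwards [Metric.ball_mem_nhds (0:ℝ) hε] with τ hτ
    exact hΓeq τ (by simpa [Real.dist_eq] using hτ)
  exact hΓd.deriv
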